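/- Let b₀, …, b_{n−1} ∈ K and let M be the σ-Dickson matrix associated with them. If det M = 0, then for every row index r, the r-th row of M lies in the K-linear span of the remaining n−1 rows of M. -/

import Mathlib

/-- If a σ-Dickson matrix is singular, then each of its rows lies in the
span of the remaining rows. -/
theorem stmt_17 (q n s : ℕ) (hq : IsPrimePow q) (hn : 3 ≤ n) (hs : 0 < s)
    (hsn : Nat.Coprime s n) (K : Type*) [Field K] [Fintype K]
    (hK : Fintype.card K = q ^ n)
    (b : ℕ → K) (M : Matrix (Fin n) (Fin n) K)
    (hM : ∀ r c : Fin n,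
      M r c = b (((c : ℕ) + n - (r : ℕ)) % n) ^ ((q ^ s) ^ (r : ℕ)))
    (hdet : M.det = 0) :
    ∀ r : Fin n, M r ∈ Submodule.span K (M '' {i : Fin n | i ≠ r}) := by
  haveI : NeZero n := ⟨by omega⟩
  set t : ℕ := q ^ s with ht
  have hq2 : 2 ≤ q := hq.two_le
  have ht0 : 0 < t := pow_pos (by omega) s
  -- characteristic of K
  obtain ⟨p0, hc⟩ := CharP.exists K
  haveI : CharP K p0 := hc
  obtain ⟨m, hp0, hcard⟩ := FiniteField.card K p0
  haveI : Fact p0.Prime := ⟨hp0⟩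
  obtain ⟨pr, k, hpr, hk, hq'⟩ := hq
  have hprp : pr = p0 := by
    have h1 : p0 ^ (m : ℕ) = pr ^ (k * n) := by
      rw [← hcard, hK, ← hq', ← pow_mul]
    have hd : p0 ∣ pr := by
      have h2 : p0 ∣ pr ^ (k * n) := h1 ▸ dvd_pow_self p0 m.pos.ne'
      exact hp0.dvd_of_dvd_pow h2
    exact ((Nat.prime_dvd_prime_iff_eq hp0 hpr.nat_prime).mp hd).symm
  have hts : t = p0 ^ (k * s) := by
    rw [ht, ← hq', hprp, ← pow_mul]
  -- the Frobenius-type ring hom x ↦ x ^ t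
  let φ : K →+* K :=
  { toFun := fun x => x ^ t
    map_one' := one_pow t
    map_mul' := fun x y => mul_pow x y t
    map_zero' := zero_pow ht0.ne'
    map_add' := fun x y => by rw [hts]; exact add_pow_char_pow x y p0 (k * s) }
  -- exponents of t only matter modulo n
  have hpowE : ∀ (x : K) (a : ℕ), x ^ t ^ a = x ^ t ^ (a % n) := by
    intro x a
    conv_lhs => rw [← Nat.mod_add_div a n]
    have h2 : t ^ (n * (a / n)) = Fintype.card K ^ (s * (a / n)) := by
      rw [hK]
      show (q ^ s) ^ (n * (a / n)) = (q ^ n) ^ (s * (a / n))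
      rw [← pow_mul, ← pow_mul]
      congr 1
      ring
    rw [pow_add, pow_mul, h2, FiniteField.pow_card_pow]
  -- the index arithmetic
  have hidx : ∀ c i : ℕ, c < n → i < n →
      (c + n - ((i + 1) % n)) % n = ((n - 1 + c) % n + n - i) % n := by
    intro c i hc hi
    rcases Nat.lt_or_ge (i + 1) n with h | h
    · rw [Nat.mod_eq_of_lt h]
      have hmlt : (n - 1 + c) % n < n := Nat.mod_lt _ (by omega)
      have e1 : (n - 1 + c) % n + n - i = (n - 1 + c) % n + (n - i) := by omega
      rw [e1, Nat.mod_add_mod]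
      have e2 : n - 1 + c + (n - i) = (c + n - (i + 1)) + n := by omega
      rw [e2, Nat.add_mod_right]
    · have hin : i + 1 = n := by omega
      rw [hin, Nat.mod_self, Nat.sub_zero, Nat.add_mod_right]
      rcases Nat.eq_zero_or_pos c with rfl | hc0
      · simp only [Nat.add_zero]
        rw [Nat.mod_eq_of_lt (show n - 1 < n by omega),
          show n - 1 + n - i = n by omega, Nat.mod_self, Nat.zero_mod]
      · have e3 : n - 1 + c = (c - 1) + n := by omega
        rw [e3, Nat.add_mod_right, Nat.mod_eq_of_lt (by omega : c - 1 < n),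
          show c - 1 + n - i = c by omega]
  -- the semilinear shift property of Dickson matrices
  have hMshift : ∀ (i c : Fin n), M (i + 1) c = (M i (c - 1)) ^ t := by
    intro i c
    rw [hM, hM]
    conv_rhs => rw [← pow_mul, ← pow_succ]
    have hv1 : ((1 : Fin n) : ℕ) = 1 := by
      rw [Fin.val_one']
      exact Nat.mod_eq_of_lt (by omega)
    have hvadd : ((i + 1 : Fin n) : ℕ) = ((i : ℕ) + 1) % n := by
      rw [Fin.val_add, hv1]
    have hvsub : ((c - 1 : Fin n) : ℕ) = (n - 1 + (c : ℕ)) % n := by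
      rw [Fin.sub_def, hv1]
    rw [hpowE (b _) ((i : ℕ) + 1), hvadd, hvsub, hidx (c : ℕ) (i : ℕ) c.isLt i.isLt]
  -- left kernel of M
  obtain ⟨v, hv0, hvM⟩ := Matrix.exists_vecMul_eq_zero_iff.mpr hdet
  set P : (Fin n → K) → Prop := fun w => ∀ c, ∑ i, w i * M i c = 0 with hP
  have hvP : P v := by
    intro c
    have h := congrFun hvM c
    simpa [Matrix.vecMul, dotProduct] using h
  set S : (Fin n → K) → (Fin n → K) := fun w j => (w (j - 1)) ^ t with hSdef
  have hSP : ∀ w, P w → P (S w) := by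
    intro w hw c
    have h1 : ∑ j, S w j * M j c = ∑ i, S w (i + 1) * M (i + 1) c :=
      (Fintype.sum_equiv (Equiv.addRight (1 : Fin n))
        (fun i => S w (i + 1) * M (i + 1) c) (fun j => S w j * M j c)
        (fun i => rfl)).symm
    rw [h1]
    have h2 : ∀ i : Fin n, S w (i + 1) * M (i + 1) c = φ (w i * M i (c - 1)) := by
      intro i
      have hii : (i + 1 - 1 : Fin n) = i := by open Fin.CommRing in ring
      show (w (i + 1 - 1)) ^ t * M (i + 1) c = (w i * M i (c - 1)) ^ t
      rw [hii, hMshift i c, mul_pow]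
    rw [Finset.sum_congr rfl (fun i _ => h2 i), ← map_sum φ, hw (c - 1), map_zero]
  -- iterate the shift
  open Fin.CommRing in
  have key : ∀ (a : ℕ) (w : Fin n → K) (i : Fin n), P w → w i ≠ 0 →
      ∃ w', P w' ∧ w' (i + (a : Fin n)) ≠ 0 := by
    intro a
    induction a with
    | zero => intro w i hw hwi; exact ⟨w, hw, by simpa using hwi⟩
    | succ a ih =>
      intro w i hw hwi
      have hSne : S w (i + 1) ≠ 0 := by
        show (w (i + 1 - 1)) ^ t ≠ 0
        have hii : (i + 1 - 1 : Fin n) = i := by open Fin.CommRing in ring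
        rw [hii]
        exact pow_ne_zero _ hwi
      obtain ⟨w', hw', hw'i⟩ := ih (S w) (i + 1) (hSP w hw) hSne
      refine ⟨w', hw', ?_⟩
      have hcast : (i + ((a + 1 : ℕ) : Fin n) : Fin n) = (i + 1) + ((a : ℕ) : Fin n) := by
        push_cast
        ring
      rw [hcast]
      exact hw'i
  intro r
  have hvi : ∃ i, v i ≠ 0 := by
    by_contra h
    push_neg at h
    exact hv0 (funext fun i => h i)
  obtain ⟨i, hi⟩ := hvi
  obtain ⟨w, hw, hwr⟩ := key ((r - i : Fin n) : ℕ) v i hvP hi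
  open Fin.CommRing in
  have hir : (i + (((r - i : Fin n) : ℕ) : Fin n) : Fin n) = r := by
    rw [Fin.cast_val_eq_self]
    ring
  rw [hir] at hwr
  have hrow : M r = ∑ j ∈ Finset.univ.erase r, (-(w r)⁻¹ * w j) • M j := by
    funext c
    have h0 := hw c
    rw [← Finset.add_sum_erase _ _ (Finset.mem_univ r)] at h0
    have h1 : w r * M r c = -∑ j ∈ Finset.univ.erase r, w j * M j c :=
      eq_neg_of_add_eq_zero_left h0
    have h2 : M r c = (w r)⁻¹ * (w r * M r c) := by
      field_simp
    rw [h1] at h2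
    calc M r c = (w r)⁻¹ * -∑ j ∈ Finset.univ.erase r, w j * M j c := h2
      _ = ∑ j ∈ Finset.univ.erase r, (-(w r)⁻¹ * w j) * M j c := by
          rw [mul_neg, Finset.mul_sum, ← Finset.sum_neg_distrib]
          exact Finset.sum_congr rfl fun j _ => by ring
      _ = (∑ j ∈ Finset.univ.erase r, (-(w r)⁻¹ * w j) • M j) c := by
          simp [Finset.sum_apply, mul_assoc]
  rw [hrow]
  apply Submodule.sum_mem
  intro j hj
  apply Submodule.smul_mem
  apply Submodule.subset_span
  exact ⟨j, Finset.ne_of_mem_erase hj, rfl⟩
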